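/- With the distribution D_{i,j} defined via X_i = C_i, X_k = C_{k-1} ⊕ C_k for i<k<j, X_j = C_{j-1} (C's i.i.d. uniform bits, other variables constant), for indices k < l one has I(X_k : X_l | X_{k+1},...,X_{l-1}) = log 2 if (k,l) = (i,j), and 0 otherwise. -/

import Mathlib

open Real BigOperators Finset

/-- Probability that random variable `X` takes value `x`, under pmf `p` on a finite sample space. -/
noncomputable def pr {Ω α : Type*} [Fintype Ω] [DecidableEq α]
    (p : Ω → ℝ) (X : Ω → α) (x : α) : ℝ :=
  ∑ ω, if X ω = x then p ω else 0

/-- Shannon entropy (natural log) of a finite random variable. -/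
noncomputable def ent {Ω α : Type*} [Fintype Ω] [Fintype α] [DecidableEq α]
    (p : Ω → ℝ) (X : Ω → α) : ℝ :=
  -∑ x, pr p X x * Real.log (pr p X x)

/-- Mutual information I(X:Y) = H(X)+H(Y)-H(XY). -/
noncomputable def mi {Ω α β : Type*} [Fintype Ω] [Fintype α] [Fintype β]
    [DecidableEq α] [DecidableEq β] (p : Ω → ℝ) (X : Ω → α) (Y : Ω → β) : ℝ :=
  ent p X + ent p Y - ent p (fun ω => (X ω, Y ω))

/-- Conditional mutual information I(X:Y|Z) = H(XZ)+H(YZ)-H(XYZ)-H(Z). -/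
noncomputable def cmi {Ω α β γ : Type*} [Fintype Ω] [Fintype α] [Fintype β] [Fintype γ]
    [DecidableEq α] [DecidableEq β] [DecidableEq γ]
    (p : Ω → ℝ) (X : Ω → α) (Y : Ω → β) (Z : Ω → γ) : ℝ :=
  ent p (fun ω => (X ω, Z ω)) + ent p (fun ω => (Y ω, Z ω))
    - ent p (fun ω => (X ω, Y ω, Z ω)) - ent p Z

/-- Uniform pmf on `n` bits. -/
noncomputable def pUnif (n : ℕ) : (Fin n → Bool) → ℝ := fun _ => ((2 : ℝ) ^ n)⁻¹

/-- The `k`-th shared bit `C_k` (for `k < n`; junk value otherwise). -/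
def bitv (n : ℕ) (k : ℕ) (ω : Fin n → Bool) : Bool :=
  if h : k < n then ω ⟨k, h⟩ else true

/-- The variables of the distribution `D_{i,j}`: `X_i = C_i`,
`X_k = C_{k-1} ⊕ C_k` for `i < k < j`, `X_j = C_{j-1}`, and `X_k = 1`
(constant) for `k < i` or `k > j`. -/
def Xv (n i j : ℕ) (k : ℕ) (ω : Fin n → Bool) : Bool :=
  if k < i ∨ j < k then true
  else if k = i then bitv n i ω
  else if k = j then bitv n (j - 1) ω
  else xor (bitv n (k - 1) ω) (bitv n k ω)


section Aux

lemma pr_eq_card {n : ℕ} {α : Type*} [DecidableEq α] (X : (Fin n → Bool) → α) (x : α) :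
    pr (pUnif n) X x = ((univ.filter fun ω => X ω = x).card : ℝ) * ((2:ℝ)^n)⁻¹ := by
  rw [pr, ← Finset.sum_filter]
  simp [pUnif, mul_comm]

lemma sum_pr {n : ℕ} {α : Type*} [Fintype α] [DecidableEq α] (X : (Fin n → Bool) → α) :
    ∑ x, pr (pUnif n) X x = 1 := by
  unfold pr
  rw [Finset.sum_comm]
  have h1 : ∀ ω : Fin n → Bool, (∑ x : α, if X ω = x then pUnif n ω else 0) = pUnif n ω := by
    intro ω
    rw [Finset.sum_ite_eq univ (X ω) (fun _ => pUnif n ω)]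
    simp
  rw [Finset.sum_congr rfl (fun ω _ => h1 ω)]
  unfold pUnif
  simp [pUnif, Finset.card_univ]

lemma ent_of_card {n : ℕ} {α : Type*} [Fintype α] [DecidableEq α]
    (X : (Fin n → Bool) → α) (c : ℕ)
    (hc : ∀ ω, (univ.filter fun ω' => X ω' = X ω).card = c) :
    ent (pUnif n) X = n * Real.log 2 - Real.log c := by
  have hq : (0:ℝ) < ((2:ℝ)^n)⁻¹ := by positivity
  have hcpos : 0 < c := by
    rw [← hc (fun _ => true)]
    apply Finset.card_pos.mpr
    exact ⟨fun _ => true, by simp⟩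
  have key : ∀ x : α, pr (pUnif n) X x * Real.log (pr (pUnif n) X x)
      = pr (pUnif n) X x * Real.log ((c : ℝ) * ((2:ℝ)^n)⁻¹) := by
    intro x
    by_cases h : pr (pUnif n) X x = 0
    · rw [h]; ring
    · congr 1
      rw [pr_eq_card] at h ⊢
      have hcard : (univ.filter fun ω => X ω = x).card ≠ 0 := by
        intro h0; rw [h0] at h; simp at h
      obtain ⟨ω, hω⟩ := Finset.card_pos.mp (Nat.pos_of_ne_zero hcard)
      simp only [Finset.mem_filter] at hω
      rw [show x = X ω from hω.2.symm, hc ω]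
  unfold ent
  rw [Finset.sum_congr rfl (fun x _ => key x), ← Finset.sum_mul, sum_pr, one_mul]
  rw [Real.log_mul (by positivity) (by positivity), Real.log_inv, Real.log_pow]
  push_cast
  ring

def dd (i j a b : ℕ) : ℕ :=
  if a ≤ b then min b (j - 1) + 1 - (if b = j then max i (a - 1) else a) else 0

lemma bitv_lt {n k : ℕ} (h : k < n) (ω : Fin n → Bool) : bitv n k ω = ω ⟨k, h⟩ := dif_pos h
lemma Xv_out {n i j m : ℕ} (h : m < i ∨ j < m) (ω : Fin n → Bool) : Xv n i j m ω = true :=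
  if_pos h
lemma Xv_at_i {n i j : ℕ} (hij : i ≤ j) (ω : Fin n → Bool) : Xv n i j i ω = bitv n i ω := by
  unfold Xv; rw [if_neg (by omega), if_pos rfl]
lemma Xv_at_j {n i j : ℕ} (hij : i < j) (ω : Fin n → Bool) :
    Xv n i j j ω = bitv n (j - 1) ω := by
  unfold Xv; rw [if_neg (by omega), if_neg (by omega), if_pos rfl]
lemma Xv_mid {n i j m : ℕ} (h1 : i < m) (h2 : m < j) (ω : Fin n → Bool) :
    Xv n i j m ω = xor (bitv n (m - 1) ω) (bitv n m ω) := by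
  unfold Xv; rw [if_neg (by omega), if_neg (by omega), if_neg (by omega)]
lemma card_interval (n Da Db : ℕ) (h : Db < n) :
    (univ.filter fun t : Fin n => Da ≤ t.val ∧ t.val ≤ Db).card = Db + 1 - Da := by
  rw [← Nat.card_Icc Da Db]
  rw [← Finset.card_image_of_injective
    (univ.filter fun t : Fin n => Da ≤ t.val ∧ t.val ≤ Db) Fin.val_injective]
  congr 1
  ext m
  simp only [Finset.mem_image, Finset.mem_filter, Finset.mem_univ, true_and, Finset.mem_Icc]
  constructor
  · rintro ⟨t, ht, rfl⟩; exact ht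
  · rintro ⟨h1, h2⟩; exact ⟨⟨m, by omega⟩, ⟨h1, h2⟩, rfl⟩

lemma count_det (n : ℕ) (P : (Fin n → Bool) → Prop) [DecidablePred P]
    (D : Finset (Fin n)) (F : (Fin n → Bool) → Fin n → Bool)
    (hiff : ∀ ω', P ω' ↔ ∀ t ∈ D, ω' t = F ω' t)
    (hdep : ∀ ω₁ ω₂, (∀ s, s ∉ D → ω₁ s = ω₂ s) → ∀ t, F ω₁ t = F ω₂ t) :
    (univ.filter P).card = 2 ^ (n - D.card) := by
  classical
  set ext0 : ({s : Fin n // s ∉ D} → Bool) → Fin n → Bool :=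
    fun u t => if h : t ∈ D then true else u ⟨t, h⟩ with hext0
  set extf : ({s : Fin n // s ∉ D} → Bool) → Fin n → Bool :=
    fun u t => if h : t ∈ D then F (ext0 u) t else u ⟨t, h⟩ with hextf
  have hagree : ∀ u s, s ∉ D → ext0 u s = extf u s := by
    intro u s hs; simp [hext0, hextf, hs]
  have hP : ∀ u, P (extf u) := by
    intro u
    rw [hiff]
    intro t ht
    have h1 : extf u t = F (ext0 u) t := by simp [hextf, ht]
    rw [h1, hdep (ext0 u) (extf u) (fun s hs => hagree u s hs) t]
  have e : {ω' // P ω'} ≃ ({s : Fin n // s ∉ D} → Bool) :=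
    { toFun := fun w s => w.1 s.1
      invFun := fun u => ⟨extf u, hP u⟩
      left_inv := by
        rintro ⟨ω', hω'⟩
        apply Subtype.ext
        show extf (fun s => ω' s.1) = ω'
        funext t
        by_cases h : t ∈ D
        · have h1 : extf (fun s => ω' s.1) t = F (ext0 (fun s => ω' s.1)) t := by
            simp [hextf, h]
          rw [h1, hdep _ ω' (fun s hs => by simp [hext0, hs]) t]
          exact ((hiff ω').mp hω' t h).symm
        · simp [hextf, h]
      right_inv := by
        intro u; funext s
        show extf u s.1 = u s
        simp [hextf, s.2] }
  calc (univ.filter P).card = Fintype.card {ω' // P ω'} := (Fintype.card_subtype P).symm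
    _ = Fintype.card ({s : Fin n // s ∉ D} → Bool) := Fintype.card_congr e
    _ = 2 ^ (n - D.card) := by
        rw [Fintype.card_fun, Fintype.card_bool, Fintype.card_subtype_compl,
          Fintype.card_coe, Fintype.card_fin]

open Classical in
lemma key (n i j a b : ℕ) (hi : 1 ≤ i) (hij : i < j) (hj : j ≤ n)
    (hia : i ≤ a) (hbj : b ≤ j) (ω : Fin n → Bool) :
    (univ.filter fun ω' => ∀ m, a ≤ m → m ≤ b → Xv n i j m ω' = Xv n i j m ω).card
      = 2 ^ (n - dd i j a b) := by
  classical
  have bx1 : ∀ p q r s : Bool, xor p q = xor r s → p = r → q = s := by decide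
  have bx2 : ∀ p q r s : Bool, xor p q = xor r s → q = s → p = r := by decide
  have bx3 : ∀ p q r s : Bool, xor p q = xor r s → q = xor p (xor r s) := by decide
  have bx4 : ∀ p q r s x y : Bool, xor p q = xor r s → p = xor x (xor y r) →
      q = xor x (xor y s) := by decide
  by_cases hab : a ≤ b
  swap
  · rw [show dd i j a b = 0 by rw [dd, if_neg hab]]
    rw [Finset.filter_true_of_mem (fun ω' _ => fun m h1 h2 => absurd (le_trans h1 h2) hab)]
    rw [Finset.card_univ, Fintype.card_fun, Fintype.card_bool, Fintype.card_fin, Nat.sub_zero]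
  rcases eq_or_lt_of_le hia with hai | hai
  · -- Case A : a = i  (hai : i = a)
    set D : Finset (Fin n) := univ.filter (fun t => i ≤ t.val ∧ t.val ≤ min b (j - 1)) with hD
    have hmemD : ∀ t : Fin n, t ∈ D ↔ i ≤ t.val ∧ t.val ≤ min b (j - 1) := by
      intro t; simp [hD]
    have hiff : ∀ ω', (∀ m, a ≤ m → m ≤ b → Xv n i j m ω' = Xv n i j m ω)
        ↔ ∀ t ∈ D, ω' t = ω t := by
      intro ω'
      constructor
      · intro hP
        have aux : ∀ m, m ≤ min b (j - 1) → i ≤ m → ∀ h : m < n, ω' ⟨m, h⟩ = ω ⟨m, h⟩ := by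
          intro m
          induction m using Nat.strong_induction_on with
          | _ m IH =>
            intro hm him h
            rcases eq_or_lt_of_le him with he | hlt
            · have hPi := hP i (by omega) (by omega)
              rw [Xv_at_i hij.le, Xv_at_i hij.le,
                bitv_lt (by omega : i < n), bitv_lt (by omega : i < n)] at hPi
              have hcoe : (⟨i, by omega⟩ : Fin n) = ⟨m, h⟩ := by
                apply Fin.ext; simp; omega
              rwa [hcoe] at hPi
            · have hPm := hP m (by omega) (by omega)
              rw [Xv_mid hlt (by omega), Xv_mid hlt (by omega),
                bitv_lt (by omega : m - 1 < n), bitv_lt h,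
                bitv_lt (by omega : m - 1 < n), bitv_lt h] at hPm
              have hprev := IH (m - 1) (by omega) (by omega) (by omega) (by omega)
              exact bx1 _ _ _ _ hPm hprev
        intro t ht
        rw [hmemD] at ht
        simpa using aux t.val ht.2 ht.1 t.isLt
      · intro hDv m h1 h2
        have hval : ∀ m', i ≤ m' → m' ≤ min b (j - 1) → ∀ h : m' < n,
            ω' ⟨m', h⟩ = ω ⟨m', h⟩ := by
          intro m' h1' h2' h
          exact hDv ⟨m', h⟩ ((hmemD _).mpr ⟨h1', h2'⟩)
        rcases Nat.lt_trichotomy m j with hmj | hmj | hmj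
        · rcases eq_or_lt_of_le (show i ≤ m by omega) with he | hlt
          · rw [← he, Xv_at_i hij.le, Xv_at_i hij.le, bitv_lt (by omega : i < n),
              bitv_lt (by omega : i < n)]
            exact hval i le_rfl (by omega) _
          · rw [Xv_mid hlt hmj, Xv_mid hlt hmj, bitv_lt (by omega : m - 1 < n),
              bitv_lt (by omega : m < n), bitv_lt (by omega : m - 1 < n),
              bitv_lt (by omega : m < n)]
            rw [hval (m-1) (by omega) (by omega) (by omega),
              hval m (by omega) (by omega) (by omega)]
        · rw [hmj, Xv_at_j hij, Xv_at_j hij, bitv_lt (by omega : j - 1 < n),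
            bitv_lt (by omega : j - 1 < n)]
          exact hval (j-1) (by omega) (by omega) _
        · exact absurd (h2.trans hbj) (by omega)
    rw [count_det n _ D (fun _ t => ω t) hiff (fun _ _ _ _ => rfl),
      hD, card_interval n _ _ (by omega)]
    congr 1
    rw [dd, if_pos hab]
    split_ifs <;> omega
  rcases eq_or_ne b j with hbj' | hbj'
  · -- Case B : i < a, b = j
    set D : Finset (Fin n) := univ.filter (fun t => a - 1 ≤ t.val ∧ t.val ≤ j - 1) with hD
    have hmemD : ∀ t : Fin n, t ∈ D ↔ a - 1 ≤ t.val ∧ t.val ≤ j - 1 := by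
      intro t; simp [hD]
    have hiff : ∀ ω', (∀ m, a ≤ m → m ≤ b → Xv n i j m ω' = Xv n i j m ω)
        ↔ ∀ t ∈ D, ω' t = ω t := by
      intro ω'
      constructor
      · intro hP
        have aux : ∀ d, a - 1 ≤ j - 1 - d → ∀ h : j - 1 - d < n,
            ω' ⟨j - 1 - d, h⟩ = ω ⟨j - 1 - d, h⟩ := by
          intro d
          induction d with
          | zero =>
            intro hd h
            have hPj := hP j (by omega) (by omega)
            rw [Xv_at_j hij, Xv_at_j hij, bitv_lt (by omega : j - 1 < n),
              bitv_lt (by omega : j - 1 < n)] at hPj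
            have hcoe : (⟨j - 1, by omega⟩ : Fin n) = ⟨j - 1 - 0, h⟩ := by
              apply Fin.ext; simp
            rwa [hcoe] at hPj
          | succ d IH =>
            intro hd h
            have hPm := hP (j - 1 - d) (by omega) (by omega)
            rw [Xv_mid (by omega) (by omega), Xv_mid (by omega) (by omega),
              bitv_lt (by omega : j - 1 - d - 1 < n), bitv_lt (by omega : j - 1 - d < n),
              bitv_lt (by omega : j - 1 - d - 1 < n), bitv_lt (by omega : j - 1 - d < n)] at hPm
            have hnext := IH (by omega) (by omega)
            have hres := bx2 _ _ _ _ hPm hnext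
            have hcoe : (⟨j - 1 - d - 1, by omega⟩ : Fin n) = ⟨j - 1 - (d+1), h⟩ := by
              apply Fin.ext; simp; omega
            rwa [hcoe] at hres
        intro t ht
        rw [hmemD] at ht
        have := aux (j - 1 - t.val) (by omega) (by omega)
        have hcoe : (⟨j - 1 - (j - 1 - t.val), by omega⟩ : Fin n) = t := by
          apply Fin.ext; simp; omega
        rwa [hcoe] at this
      · intro hDv m h1 h2
        have hval : ∀ m', a - 1 ≤ m' → m' ≤ j - 1 → ∀ h : m' < n,
            ω' ⟨m', h⟩ = ω ⟨m', h⟩ := by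
          intro m' h1' h2' h
          exact hDv ⟨m', h⟩ ((hmemD _).mpr ⟨h1', h2'⟩)
        rcases eq_or_lt_of_le (show m ≤ j by omega) with he | hlt
        · rw [he, Xv_at_j hij, Xv_at_j hij, bitv_lt (by omega : j - 1 < n),
            bitv_lt (by omega : j - 1 < n)]
          exact hval (j-1) (by omega) (by omega) _
        · rw [Xv_mid (by omega) hlt, Xv_mid (by omega) hlt,
            bitv_lt (by omega : m - 1 < n), bitv_lt (by omega : m < n),
            bitv_lt (by omega : m - 1 < n), bitv_lt (by omega : m < n)]
          rw [hval (m-1) (by omega) (by omega) (by omega),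
            hval m (by omega) (by omega) (by omega)]
    rw [count_det n _ D (fun _ t => ω t) hiff (fun _ _ _ _ => rfl),
      hD, card_interval n _ _ (by omega)]
    congr 1
    rw [dd, if_pos hab, if_pos hbj']
    omega
  · -- Case C : i < a, b < j
    have hbj2 : b < j := lt_of_le_of_ne hbj hbj'
    have han : a - 1 < n := by omega
    set D : Finset (Fin n) := univ.filter (fun t => a ≤ t.val ∧ t.val ≤ b) with hD
    have hmemD : ∀ t : Fin n, t ∈ D ↔ a ≤ t.val ∧ t.val ≤ b := by
      intro t; simp [hD]
    set F : (Fin n → Bool) → Fin n → Bool := fun ω' t =>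
      xor (ω' ⟨a - 1, han⟩) (xor (ω ⟨a - 1, han⟩) (ω t)) with hF
    have hdep : ∀ ω₁ ω₂ : Fin n → Bool, (∀ s, s ∉ D → ω₁ s = ω₂ s) → ∀ t, F ω₁ t = F ω₂ t := by
      intro ω₁ ω₂ hag t
      have hnotD : (⟨a - 1, han⟩ : Fin n) ∉ D := by
        rw [hmemD]; simp; omega
      rw [hF]; simp only; rw [hag _ hnotD]
    have hiff : ∀ ω', (∀ m, a ≤ m → m ≤ b → Xv n i j m ω' = Xv n i j m ω)
        ↔ ∀ t ∈ D, ω' t = F ω' t := by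
      intro ω'
      constructor
      · intro hP
        have aux : ∀ m, m ≤ b → a ≤ m → ∀ h : m < n,
            ω' ⟨m, h⟩ = xor (ω' ⟨a - 1, han⟩) (xor (ω ⟨a - 1, han⟩) (ω ⟨m, h⟩)) := by
          intro m
          induction m using Nat.strong_induction_on with
          | _ m IH =>
            intro hm ham h
            have hPm := hP m ham hm
            rw [Xv_mid (by omega) (by omega), Xv_mid (by omega) (by omega),
              bitv_lt (by omega : m - 1 < n), bitv_lt h,
              bitv_lt (by omega : m - 1 < n), bitv_lt h] at hPm
            rcases eq_or_lt_of_le ham with he | hlt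
            · have hcoe : (⟨m - 1, by omega⟩ : Fin n) = ⟨a - 1, han⟩ := by
                apply Fin.ext; simp; omega
              rw [hcoe] at hPm
              exact bx3 _ _ _ _ hPm
            · have hprev := IH (m - 1) (by omega) (by omega) (by omega) (by omega)
              exact bx4 _ _ _ _ _ _ hPm hprev
        intro t ht
        rw [hmemD] at ht
        rw [hF]; simp only
        simpa using aux t.val ht.2 ht.1 t.isLt
      · intro hDv m h1 h2
        have hval : ∀ m', a ≤ m' → m' ≤ b → ∀ h : m' < n,
            ω' ⟨m', h⟩ = xor (ω' ⟨a - 1, han⟩) (xor (ω ⟨a - 1, han⟩) (ω ⟨m', h⟩)) := by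
          intro m' h1' h2' h
          exact hDv ⟨m', h⟩ ((hmemD _).mpr ⟨h1', h2'⟩)
        rw [Xv_mid (by omega) (by omega), Xv_mid (by omega) (by omega),
          bitv_lt (by omega : m - 1 < n), bitv_lt (by omega : m < n),
          bitv_lt (by omega : m - 1 < n), bitv_lt (by omega : m < n)]
        rcases eq_or_lt_of_le h1 with he | hlt
        · have hcoe : (⟨m - 1, by omega⟩ : Fin n) = ⟨a - 1, han⟩ := by
            apply Fin.ext; simp; omega
          rw [hcoe, hval m (by omega) h2 (by omega)]
          generalize ω' ⟨a-1, han⟩ = p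
          generalize ω ⟨a-1, han⟩ = r
          generalize ω ⟨m, by omega⟩ = s
          revert p r s; decide
        · rw [hval (m-1) (by omega) (by omega) (by omega), hval m (by omega) h2 (by omega)]
          generalize ω' ⟨a-1, han⟩ = p
          generalize ω ⟨a-1, han⟩ = r
          generalize ω ⟨m-1, by omega⟩ = s
          generalize ω ⟨m, by omega⟩ = u
          revert p r s u; decide
    rw [count_det n _ D F hiff hdep, hD, card_interval n _ _ (by omega)]
    congr 1
    rw [dd, if_pos hab, if_neg hbj']
    omega


open Classical in
lemma qp_card (n i j lo hi : ℕ) (hi1 : 1 ≤ i) (hij : i < j) (hj : j ≤ n) (ω : Fin n → Bool) :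
    (univ.filter fun ω' => ∀ m, lo ≤ m → m ≤ hi → Xv n i j m ω' = Xv n i j m ω).card
      = 2 ^ (n - dd i j (max lo i) (min hi j)) := by
  have hiff : ∀ ω', (∀ m, lo ≤ m → m ≤ hi → Xv n i j m ω' = Xv n i j m ω)
      ↔ (∀ m, max lo i ≤ m → m ≤ min hi j → Xv n i j m ω' = Xv n i j m ω) := by
    intro ω'
    constructor
    · intro h m h1 h2; exact h m (by omega) (by omega)
    · intro h m h1 h2
      by_cases hout : m < i ∨ j < m
      · rw [Xv_out hout, Xv_out hout]
      · push_neg at hout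
        exact h m (by omega) (by omega)
  rw [Finset.filter_congr (fun ω' _ => hiff ω')]
  exact key n i j (max lo i) (min hi j) hi1 hij hj (le_max_right _ _) (min_le_right _ _) ω

lemma dd_le (i j a b : ℕ) (h1 : 1 ≤ i) (h2 : i < j) : dd i j a b ≤ j := by
  rw [dd]; split_ifs <;> omega

open Classical in
lemma ent_of_qp {n i j : ℕ} {α : Type*} [Fintype α] [DecidableEq α]
    (lo hi : ℕ) (hi1 : 1 ≤ i) (hij : i < j) (hj : j ≤ n)
    (X : (Fin n → Bool) → α)
    (hfib : ∀ ω ω', X ω' = X ω ↔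
      (∀ m, lo ≤ m → m ≤ hi → Xv n i j m ω' = Xv n i j m ω)) :
    ent (pUnif n) X = (dd i j (max lo i) (min hi j) : ℝ) * Real.log 2 := by
  set d := dd i j (max lo i) (min hi j) with hd
  have hdn : d ≤ n := le_trans (dd_le i j _ _ hi1 hij) hj
  have hcard : ∀ ω, (univ.filter fun ω' => X ω' = X ω).card = 2 ^ (n - d) := by
    intro ω
    rw [Finset.filter_congr (fun ω' _ => hfib ω ω')]
    exact qp_card n i j lo hi hi1 hij hj ω
  rw [ent_of_card X (2 ^ (n - d)) hcard]
  rw [Nat.cast_pow, Real.log_pow, Nat.cast_sub hdn]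
  push_cast
  ring

set_option maxHeartbeats 1000000 in
lemma dd_arith1 (i j k l : ℕ) (hi : 1 ≤ i) (hij : i < j) (hkl : k < l)
    (hc : k = i ∧ l = j) :
    dd i j (max k i) (min (l - 1) j) + dd i j (max (k + 1) i) (min l j)
      = dd i j (max k i) (min l j) + dd i j (max (k + 1) i) (min (l - 1) j) + 1 := by
  simp only [dd]
  split_ifs <;> omega

set_option maxHeartbeats 1000000 in
lemma dd_arith2 (i j k l : ℕ) (hi : 1 ≤ i) (hij : i < j) (hkl : k < l)
    (hc : ¬(k = i ∧ l = j)) :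
    dd i j (max k i) (min (l - 1) j) + dd i j (max (k + 1) i) (min l j)
      = dd i j (max k i) (min l j) + dd i j (max (k + 1) i) (min (l - 1) j) := by
  simp only [dd]
  split_ifs <;> omega

end Aux

/-- For the distribution `D_{i,j}` and indices `k < l`,
`I(X_k : X_l | X_{k+1},…,X_{l-1})` equals `log 2` if `(k,l) = (i,j)` and `0`
otherwise. -/
theorem Dij_cmi (n i j : ℕ) (hi : 1 ≤ i) (hij : i < j) (hj : j ≤ n)
    (k l : ℕ) (hk : 1 ≤ k) (hkl : k < l) (hl : l ≤ n) :
    cmi (pUnif n) (fun ω => Xv n i j k ω) (fun ω => Xv n i j l ω)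
        (fun ω (m : {m : Fin n // k < m.val + 1 ∧ m.val + 1 < l}) =>
          Xv n i j (m.val.val + 1) ω) =
      if k = i ∧ l = j then Real.log 2 else 0 := by
  classical
  set Z : (Fin n → Bool) → ({m : Fin n // k < m.val + 1 ∧ m.val + 1 < l} → Bool) :=
    fun ω m => Xv n i j (m.val.val + 1) ω with hZ
  have fibZ : ∀ ω ω', Z ω' = Z ω ↔
      (∀ m, k + 1 ≤ m → m ≤ l - 1 → Xv n i j m ω' = Xv n i j m ω) := by
    intro ω ω'
    constructor
    · intro h m h1 h2
      have hmn : m - 1 < n := by omega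
      have := congrFun h ⟨⟨m - 1, hmn⟩, by simp; omega⟩
      simp only [hZ] at this
      rwa [show m - 1 + 1 = m by omega] at this
    · intro h
      funext t
      exact h (t.val.val + 1) (by omega) (by have := t.2.2; omega)
  have fib1 : ∀ ω ω', (fun ω => (Xv n i j k ω, Z ω)) ω' = (fun ω => (Xv n i j k ω, Z ω)) ω ↔
      (∀ m, k ≤ m → m ≤ l - 1 → Xv n i j m ω' = Xv n i j m ω) := by
    intro ω ω'
    simp only [Prod.mk.injEq]
    constructor
    · rintro ⟨h1, h2⟩ m hm1 hm2
      rcases eq_or_lt_of_le hm1 with he | hlt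
      · rw [← he]; exact h1
      · exact (fibZ ω ω').mp h2 m (by omega) (by omega)
    · intro h
      exact ⟨h k le_rfl (by omega), (fibZ ω ω').mpr (fun m h1 h2 => h m (by omega) (by omega))⟩
  have fib2 : ∀ ω ω', (fun ω => (Xv n i j l ω, Z ω)) ω' = (fun ω => (Xv n i j l ω, Z ω)) ω ↔
      (∀ m, k + 1 ≤ m → m ≤ l → Xv n i j m ω' = Xv n i j m ω) := by
    intro ω ω'
    simp only [Prod.mk.injEq]
    constructor
    · rintro ⟨h1, h2⟩ m hm1 hm2
      rcases eq_or_lt_of_le hm2 with he | hlt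
      · rw [he]; exact h1
      · exact (fibZ ω ω').mp h2 m (by omega) (by omega)
    · intro h
      exact ⟨h l (by omega) le_rfl, (fibZ ω ω').mpr (fun m h1 h2 => h m (by omega) (by omega))⟩
  have fib3 : ∀ ω ω', (fun ω => (Xv n i j k ω, Xv n i j l ω, Z ω)) ω'
        = (fun ω => (Xv n i j k ω, Xv n i j l ω, Z ω)) ω ↔
      (∀ m, k ≤ m → m ≤ l → Xv n i j m ω' = Xv n i j m ω) := by
    intro ω ω'
    simp only [Prod.mk.injEq]
    constructor
    · rintro ⟨h1, h2, h3⟩ m hm1 hm2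
      rcases eq_or_lt_of_le hm1 with he | hlt
      · rw [← he]; exact h1
      · rcases eq_or_lt_of_le hm2 with he' | hlt'
        · rw [he']; exact h2
        · exact (fibZ ω ω').mp h3 m (by omega) (by omega)
    · intro h
      exact ⟨h k le_rfl (by omega), h l (by omega) le_rfl,
        (fibZ ω ω').mpr (fun m h1 h2 => h m (by omega) (by omega))⟩
  rw [cmi]
  rw [ent_of_qp k (l - 1) hi hij hj _ fib1,
    ent_of_qp (k + 1) l hi hij hj _ fib2,
    ent_of_qp k l hi hij hj _ fib3,
    ent_of_qp (k + 1) (l - 1) hi hij hj Z fibZ]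
  set d1 := dd i j (max k i) (min (l - 1) j) with hd1
  set d2 := dd i j (max (k + 1) i) (min l j) with hd2
  set d3 := dd i j (max k i) (min l j) with hd3
  set d4 := dd i j (max (k + 1) i) (min (l - 1) j) with hd4
  by_cases hc : k = i ∧ l = j
  · rw [if_pos hc]
    have hn : d1 + d2 = d3 + d4 + 1 := by
      rw [hd1, hd2, hd3, hd4]
      exact dd_arith1 i j k l hi hij hkl hc
    have hR : (d1 : ℝ) + d2 = (d3 : ℝ) + d4 + 1 := by exact_mod_cast hn
    linear_combination Real.log 2 * hR
  · rw [if_neg hc]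
    have hn : d1 + d2 = d3 + d4 := by
      rw [hd1, hd2, hd3, hd4]
      exact dd_arith2 i j k l hi hij hkl hc
    have hR : (d1 : ℝ) + d2 = (d3 : ℝ) + d4 := by exact_mod_cast hn
    linear_combination Real.log 2 * hR
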